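/- Let (g,B,ω) be a quadratic symplectic Lie algebra over an algebraically closed field K of characteristic 0. Then there exist two Lie subalgebras U and V of g such that g = U ⊕ V as vector spaces, B(U,U) = B(V,V) = {0} and ω(U,U) = ω(V,V) = {0}; that is, (g = U ⊕ V, B, ω) is a special symplectic Manin algebra. -/

import Mathlib

/-- A rational-linear functional on a `CharZero` field that is nonzero on every nonzero
element of a given finite set. -/
lemma exists_rat_functional (K : Type*) [Field K] [CharZero K] (s : Finset K) :
    ∃ f : K →ₗ[ℚ] ℚ, ∀ c ∈ s, c ≠ 0 → f c ≠ 0 := by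
  classical
  induction s using Finset.induction_on with
  | empty => exact ⟨0, by simp⟩
  | @insert a s ha ih =>
    obtain ⟨f, hf⟩ := ih
    by_cases haz : a = 0
    · refine ⟨f, fun c hc hc0 => ?_⟩
      rcases Finset.mem_insert.mp hc with rfl | h
      · exact absurd haz hc0
      · exact hf c h hc0
    · have hex : ∃ gg : K →ₗ[ℚ] ℚ, gg a ≠ 0 := by
        by_contra h
        push_neg at h
        exact haz ((Module.forall_dual_apply_eq_zero_iff ℚ a).mp h)
      obtain ⟨gg, hg⟩ := hex
      obtain ⟨c, hc⟩ := Infinite.exists_notMem_finset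
        ((insert a s).image (fun b => -(f b) / gg b))
      refine ⟨f + c • gg, fun b hb hb0 => ?_⟩
      by_cases hgb : gg b = 0
      · have hbs : b ∈ s := by
          rcases Finset.mem_insert.mp hb with rfl | h
          · exact absurd hgb hg
          · exact h
        simpa [hgb] using hf b hbs hb0
      · intro h
        apply hc
        simp only [LinearMap.add_apply, LinearMap.smul_apply, smul_eq_mul] at h
        have hcv : c = -(f b) / gg b := by
          rw [eq_div_iff hgb]; linarith
        rw [hcv]
        exact Finset.mem_image_of_mem _ hb

/-- Generalized eigenspaces of a `B`-skew endomorphism pair trivially unless the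
eigenvalues sum to zero. -/
lemma bilin_maxGen_pair {K M : Type*} [Field K] [AddCommGroup M] [Module K M]
    (B : LinearMap.BilinForm K M) (δ : Module.End K M)
    (hskew : ∀ x y, B (δ x) y = - B x (δ y))
    {lam mu : K} (hlm : lam + mu ≠ 0) :
    ∀ x ∈ δ.maxGenEigenspace lam, ∀ y ∈ δ.maxGenEigenspace mu, B x y = 0 := by
  suffices H : ∀ (n k l : ℕ), k + l ≤ n → ∀ x y : M,
      ((δ - lam • 1) ^ k) x = 0 → ((δ - mu • 1) ^ l) y = 0 → B x y = 0 by
    intro x hx y hy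
    obtain ⟨k, hk⟩ := (Module.End.mem_maxGenEigenspace _ _ _).mp hx
    obtain ⟨l, hl⟩ := (Module.End.mem_maxGenEigenspace _ _ _).mp hy
    exact H (k + l) k l le_rfl x y hk hl
  intro n
  induction n with
  | zero =>
    intro k l hkl x y hx hy
    have hk0 : k = 0 := by omega
    subst hk0
    simp only [pow_zero, Module.End.one_apply] at hx
    rw [hx]; simp
  | succ n ih =>
    intro k l hkl x y hx hy
    match k, l with
    | 0, _ =>
      simp only [pow_zero, Module.End.one_apply] at hx
      rw [hx]; simp
    | _, 0 =>
      simp only [pow_zero, Module.End.one_apply] at hy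
      rw [hy]; simp
    | (k' + 1), (l' + 1) =>
      set x' := (δ - lam • 1) x with hx'def
      set y' := (δ - mu • 1) y with hy'def
      have hx' : ((δ - lam • 1) ^ k') x' = 0 := by
        rw [hx'def, ← Module.End.mul_apply, ← pow_succ]; exact hx
      have hy' : ((δ - mu • 1) ^ l') y' = 0 := by
        rw [hy'def, ← Module.End.mul_apply, ← pow_succ]; exact hy
      have h1 : B x' y = 0 := ih k' (l' + 1) (by omega) x' y hx' hy
      have h2 : B x y' = 0 := ih (k' + 1) l' (by omega) x y' hx hy'
      have e1 : B x' y = B (δ x) y - lam * B x y := by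
        rw [hx'def]
        simp [LinearMap.sub_apply, LinearMap.smul_apply, Module.End.one_apply,
          map_sub, map_smul, smul_eq_mul]
      have e2 : B x y' = B x (δ y) - mu * B x y := by
        rw [hy'def]
        simp [LinearMap.sub_apply, LinearMap.smul_apply, Module.End.one_apply,
          map_sub, map_smul, smul_eq_mul]
      rw [e1] at h1
      rw [e2] at h2
      have hs := hskew x y
      have key : (lam + mu) * B x y = 0 := by linear_combination -h1 - h2 + hs
      exact (mul_eq_zero.mp key).resolve_left hlm

/-- The bracket of generalized eigenvectors of a derivation is a generalized eigenvector
for the sum of the eigenvalues. -/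
lemma lie_maxGen_mem {K L : Type*} [Field K] [LieRing L] [LieAlgebra K L]
    (δ : Module.End K L) (hder : ∀ x y : L, δ ⁅x, y⁆ = ⁅δ x, y⁆ + ⁅x, δ y⁆)
    {lam mu : K} :
    ∀ x ∈ δ.maxGenEigenspace lam, ∀ y ∈ δ.maxGenEigenspace mu,
      ⁅x, y⁆ ∈ δ.maxGenEigenspace (lam + mu) := by
  suffices H : ∀ (n k l : ℕ), k + l ≤ n → ∀ x y : L,
      ((δ - lam • 1) ^ k) x = 0 → ((δ - mu • 1) ^ l) y = 0 →
      ⁅x, y⁆ ∈ δ.maxGenEigenspace (lam + mu) by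
    intro x hx y hy
    obtain ⟨k, hk⟩ := (Module.End.mem_maxGenEigenspace _ _ _).mp hx
    obtain ⟨l, hl⟩ := (Module.End.mem_maxGenEigenspace _ _ _).mp hy
    exact H (k + l) k l le_rfl x y hk hl
  intro n
  induction n with
  | zero =>
    intro k l hkl x y hx hy
    have hk0 : k = 0 := by omega
    subst hk0
    simp only [pow_zero, Module.End.one_apply] at hx
    rw [hx, zero_lie]; exact zero_mem _
  | succ n ih =>
    intro k l hkl x y hx hy
    match k, l with
    | 0, _ =>
      simp only [pow_zero, Module.End.one_apply] at hx
      rw [hx, zero_lie]; exact zero_mem _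
    | _, 0 =>
      simp only [pow_zero, Module.End.one_apply] at hy
      rw [hy, lie_zero]; exact zero_mem _
    | (k' + 1), (l' + 1) =>
      set x' := (δ - lam • 1) x with hx'def
      set y' := (δ - mu • 1) y with hy'def
      have hx' : ((δ - lam • 1) ^ k') x' = 0 := by
        rw [hx'def, ← Module.End.mul_apply, ← pow_succ]; exact hx
      have hy' : ((δ - mu • 1) ^ l') y' = 0 := by
        rw [hy'def, ← Module.End.mul_apply, ← pow_succ]; exact hy
      have h1 := ih k' (l' + 1) (by omega) x' y hx' hy
      have h2 := ih (k' + 1) l' (by omega) x y' hx hy'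
      have hsum : (δ - (lam + mu) • 1) ⁅x, y⁆ = ⁅x', y⁆ + ⁅x, y'⁆ := by
        rw [hx'def, hy'def]
        simp only [LinearMap.sub_apply, LinearMap.smul_apply, Module.End.one_apply,
          LinearMap.add_apply, hder, sub_lie, lie_sub, smul_lie, lie_smul, add_smul]
        abel
      have hW : (δ - (lam + mu) • 1) ⁅x, y⁆ ∈ δ.maxGenEigenspace (lam + mu) := by
        rw [hsum]; exact add_mem h1 h2
      obtain ⟨m, hm⟩ := (Module.End.mem_maxGenEigenspace _ _ _).mp hW
      exact (Module.End.mem_maxGenEigenspace _ _ _).mpr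
        ⟨m + 1, by rw [pow_succ, Module.End.mul_apply]; exact hm⟩

/-- Double induction principle for properties of pairs from finset sups of submodules. -/
lemma finsetSup_induction₂ {R M : Type*} [Semiring R] [AddCommMonoid M] [Module R M]
    {ι : Type*} {s t : Finset ι} (p : ι → Submodule R M) (q : M → M → Prop)
    (h0l : ∀ y, q 0 y) (h0r : ∀ x, q x 0)
    (haddl : ∀ x₁ x₂ y, q x₁ y → q x₂ y → q (x₁ + x₂) y)
    (haddr : ∀ x y₁ y₂, q x y₁ → q x y₂ → q x (y₁ + y₂))
    (hmem : ∀ c ∈ s, ∀ d ∈ t, ∀ x ∈ p c, ∀ y ∈ p d, q x y) :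
    ∀ x ∈ s.sup p, ∀ y ∈ t.sup p, q x y := by
  intro x hx y hy
  rw [Finset.sup_eq_iSup, iSup_subtype'] at hx hy
  refine Submodule.iSup_induction (motive := fun y => q x y) _ hy ?_ (h0r x)
    (fun y₁ y₂ => haddr x y₁ y₂)
  intro d z hz
  refine Submodule.iSup_induction (motive := fun x => q x z) _ hx ?_ (h0l z)
    (fun x₁ x₂ => fun h1 h2 => haddl x₁ x₂ z h1 h2)
  intro c w hw
  exact hmem c c.2 d d.2 w hw z hz

/-- Sups of an independent family over disjoint finsets are disjoint (modular lattice). -/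
lemma finsetSup_disjoint {α ι : Type*} [CompleteLattice α] [IsModularLattice α]
    {t : ι → α} (ht : iSupIndep t)
    (s u : Finset ι) : (∀ c ∈ s, c ∉ u) → Disjoint (s.sup t) (u.sup t) := by
  classical
  induction s using Finset.induction_on with
  | empty => intro _; simp
  | @insert a s ha ih =>
    intro hsu
    rw [Finset.sup_insert]
    have hIH : Disjoint (s.sup t) (u.sup t) :=
      ih (fun c hc => hsu c (Finset.mem_insert_of_mem hc))
    refine hIH.disjoint_sup_left_of_disjoint_sup_right ?_
    have hmem : a ∉ (↑(s ∪ u) : Set ι) := by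
      simp only [Finset.coe_union, Set.mem_union, Finset.mem_coe]
      push_neg
      exact ⟨ha, hsu a (Finset.mem_insert_self a s)⟩
    have h := ht.disjoint_biSup (y := (↑(s ∪ u) : Set ι)) hmem
    have he : s.sup t ⊔ u.sup t = (s ∪ u).sup t := (Finset.sup_union).symm
    rw [he]
    simpa [Finset.sup_eq_iSup] using h

/-- Every quadratic symplectic Lie algebra `(g, B, ω)` over an algebraically closed field of
characteristic zero admits two Lie subalgebras `U` and `V` with `g = U ⊕ V` as vector spaces,
both completely isotropic for `B` and for `ω`; i.e. `(g = U ⊕ V, B, ω)` is a special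
symplectic Manin algebra. -/
theorem stmt_17 (K : Type*) [Field K] [CharZero K] [IsAlgClosed K]
    (g : Type*) [LieRing g] [LieAlgebra K g] [Module.Finite K g]
    (B ω : LinearMap.BilinForm K g)
    (hBnd : B.Nondegenerate)
    (hBsymm : ∀ x y : g, B x y = B y x)
    (hBinv : ∀ x y z : g, B ⁅x, y⁆ z = B x ⁅y, z⁆)
    (hωnd : ω.Nondegenerate)
    (hωalt : ∀ x : g, ω x x = 0)
    (hωcocy : ∀ x y z : g, ω ⁅x, y⁆ z + ω ⁅y, z⁆ x + ω ⁅z, x⁆ y = 0) :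
    ∃ U V : LieSubalgebra K g,
      IsCompl U.toSubmodule V.toSubmodule ∧
      (∀ x ∈ U, ∀ y ∈ U, B x y = 0) ∧ (∀ x ∈ V, ∀ y ∈ V, B x y = 0) ∧
      (∀ x ∈ U, ∀ y ∈ U, ω x y = 0) ∧ (∀ x ∈ V, ∀ y ∈ V, ω x y = 0) := by
  classical
  have : FiniteDimensional K g := ‹Module.Finite K g›
  -- `ω` is skew
  have hωskew : ∀ x y : g, ω x y = - ω y x := by
    intro x y
    have h := hωalt (x + y)
    simp only [map_add, LinearMap.add_apply, hωalt] at h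
    linear_combination h
  -- the structure endomorphism δ with B (δ x) y = ω x y
  set δ : Module.End K g :=
    (((LinearMap.BilinForm.toDual B hBnd).symm : Module.Dual K g →ₗ[K] g) ∘ₗ ω) with hδdef
  have hδ : ∀ x y, B (δ x) y = ω x y := fun x y =>
    LinearMap.BilinForm.apply_toDual_symm_apply (hB := hBnd) (ω x) y
  have hδskew : ∀ x y, B (δ x) y = - B x (δ y) := by
    intro x y
    rw [hδ x y, hωskew x y, hBsymm x (δ y), hδ y x]
  have hδinj : Function.Injective δ := by
    have hker : ∀ x, δ x = 0 → x = 0 := by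
      intro x hx
      apply hωnd.1 x
      intro n
      rw [← hδ x n, hx, map_zero, LinearMap.zero_apply]
    intro a b hab
    have : δ (a - b) = 0 := by rw [map_sub, hab, sub_self]
    have := hker _ this
    rwa [sub_eq_zero] at this
  -- δ is a derivation
  have hder : ∀ x y : g, δ ⁅x, y⁆ = ⁅δ x, y⁆ + ⁅x, δ y⁆ := by
    have hBinj : ∀ a b : g, (∀ z, B a z = B b z) → a = b := by
      intro a b h
      have h0 : ∀ z, B (a - b) z = 0 := fun z => by
        rw [map_sub, LinearMap.sub_apply, h, sub_self]
      have := hBnd.1 _ h0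
      rwa [sub_eq_zero] at this
    intro x y
    apply hBinj
    intro z
    have hc := hωcocy x y z
    have h1 : B ⁅δ x, y⁆ z = - ω ⁅y, z⁆ x := by
      rw [hBinv, hδ x ⁅y, z⁆, hωskew]
    have h2 : B ⁅x, δ y⁆ z = - ω ⁅z, x⁆ y := by
      have e : ⁅x, δ y⁆ = -⁅δ y, x⁆ := (lie_skew _ _).symm
      rw [e, map_neg, LinearMap.neg_apply, hBinv, hδ y ⁅x, z⁆, hωskew y ⁅x, z⁆, neg_neg]
      have e2 : ⁅x, z⁆ = -⁅z, x⁆ := (lie_skew _ _).symm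
      rw [e2, map_neg, LinearMap.neg_apply]
    rw [hδ, map_add, LinearMap.add_apply, h1, h2]
    linear_combination hc
  -- generalized eigenspaces are δ-stable
  have hδmem : ∀ (c : K), ∀ x ∈ δ.maxGenEigenspace c, δ x ∈ δ.maxGenEigenspace c :=
    fun c x hx => Module.End.mapsTo_maxGenEigenspace_of_comm (Commute.refl δ) c hx
  -- 0 is not an eigenvalue
  have h0bot : δ.maxGenEigenspace (0 : K) = ⊥ := by
    rw [Submodule.eq_bot_iff]
    intro x hx
    obtain ⟨k, hk⟩ := (Module.End.mem_maxGenEigenspace _ _ _).mp hx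
    simp only [zero_smul, sub_zero] at hk
    have hinjk : Function.Injective ⇑(δ ^ k) := by
      intro a b hab
      apply hδinj.iterate k
      rwa [← Module.End.pow_apply, ← Module.End.pow_apply]
    exact hinjk (by rw [hk, map_zero])
  -- the finite set of eigenvalues
  have hΛfin : {c : K | δ.maxGenEigenspace c ≠ ⊥}.Finite := by
    apply δ.finite_hasEigenvalue.subset
    intro c hc
    refine Module.End.hasEigenvalue_of_hasGenEigenvalue
      (k := Module.End.maxGenEigenspaceIndex δ c) ?_
    rw [Module.End.hasGenEigenvalue_iff, ← Module.End.maxGenEigenspace_eq]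
    exact hc
  set Λ : Finset K := hΛfin.toFinset with hΛdef
  obtain ⟨f, hf⟩ := exists_rat_functional K Λ
  have hfΛ : ∀ c : K, δ.maxGenEigenspace c ≠ ⊥ → f c ≠ 0 := by
    intro c h
    refine hf c (hΛfin.mem_toFinset.mpr h) ?_
    rintro rfl
    exact h h0bot
  set P : Finset K := Λ.filter (fun c => 0 < f c) with hPdef
  set N : Finset K := Λ.filter (fun c => f c < 0) with hNdef
  set U' : Submodule K g := P.sup δ.maxGenEigenspace with hU'def
  set V' : Submodule K g := N.sup δ.maxGenEigenspace with hV'def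
  -- B vanishes between eigenspaces with nonzero eigenvalue sum
  have hpair : ∀ (c d : K), c + d ≠ 0 → ∀ x ∈ δ.maxGenEigenspace c,
      ∀ y ∈ δ.maxGenEigenspace d, B x y = 0 :=
    fun c d hcd => bilin_maxGen_pair B δ hδskew hcd
  have hbr : ∀ (c d : K), ∀ x ∈ δ.maxGenEigenspace c, ∀ y ∈ δ.maxGenEigenspace d,
      ⁅x, y⁆ ∈ δ.maxGenEigenspace (c + d) :=
    fun c d => lie_maxGen_mem δ hder
  -- sign data
  have hPpos : ∀ c ∈ P, 0 < f c := fun c hc => (Finset.mem_filter.mp hc).2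
  have hNneg : ∀ c ∈ N, f c < 0 := fun c hc => (Finset.mem_filter.mp hc).2
  have hsum_ne_P : ∀ c ∈ P, ∀ d ∈ P, c + d ≠ 0 := by
    intro c hc d hd h
    have : f (c + d) = 0 := by rw [h, map_zero]
    rw [map_add] at this
    have := add_pos (hPpos c hc) (hPpos d hd)
    linarith
  have hsum_ne_N : ∀ c ∈ N, ∀ d ∈ N, c + d ≠ 0 := by
    intro c hc d hd h
    have : f (c + d) = 0 := by rw [h, map_zero]
    rw [map_add] at this
    have := add_neg (hNneg c hc) (hNneg d hd)
    linarith
  -- eigenspace sums land back in U', V'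
  have hgenU : ∀ c ∈ P, ∀ d ∈ P, δ.maxGenEigenspace (c + d) ≤ U' := by
    intro c hc d hd
    by_cases hb : δ.maxGenEigenspace (c + d) = ⊥
    · rw [hb]; exact bot_le
    · refine Finset.le_sup (Finset.mem_filter.mpr ⟨hΛfin.mem_toFinset.mpr hb, ?_⟩)
      rw [map_add]
      exact add_pos (hPpos c hc) (hPpos d hd)
  have hgenV : ∀ c ∈ N, ∀ d ∈ N, δ.maxGenEigenspace (c + d) ≤ V' := by
    intro c hc d hd
    by_cases hb : δ.maxGenEigenspace (c + d) = ⊥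
    · rw [hb]; exact bot_le
    · refine Finset.le_sup (Finset.mem_filter.mpr ⟨hΛfin.mem_toFinset.mpr hb, ?_⟩)
      rw [map_add]
      exact add_neg (hNneg c hc) (hNneg d hd)
  -- the six double inductions
  have hUlie : ∀ x ∈ U', ∀ y ∈ U', ⁅x, y⁆ ∈ U' :=
    finsetSup_induction₂ δ.maxGenEigenspace (fun x y => ⁅x, y⁆ ∈ U')
      (fun y => by show ⁅(0 : g), y⁆ ∈ U'; rw [zero_lie]; exact zero_mem _)
      (fun x => by show ⁅x, (0 : g)⁆ ∈ U'; rw [lie_zero]; exact zero_mem _)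
      (fun x₁ x₂ y h1 h2 => by show ⁅x₁ + x₂, y⁆ ∈ U'; rw [add_lie]; exact add_mem h1 h2)
      (fun x y₁ y₂ h1 h2 => by show ⁅x, y₁ + y₂⁆ ∈ U'; rw [lie_add]; exact add_mem h1 h2)
      (fun c hc d hd x hx y hy => hgenU c hc d hd (hbr c d x hx y hy))
  have hVlie : ∀ x ∈ V', ∀ y ∈ V', ⁅x, y⁆ ∈ V' :=
    finsetSup_induction₂ δ.maxGenEigenspace (fun x y => ⁅x, y⁆ ∈ V')
      (fun y => by show ⁅(0 : g), y⁆ ∈ V'; rw [zero_lie]; exact zero_mem _)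
      (fun x => by show ⁅x, (0 : g)⁆ ∈ V'; rw [lie_zero]; exact zero_mem _)
      (fun x₁ x₂ y h1 h2 => by show ⁅x₁ + x₂, y⁆ ∈ V'; rw [add_lie]; exact add_mem h1 h2)
      (fun x y₁ y₂ h1 h2 => by show ⁅x, y₁ + y₂⁆ ∈ V'; rw [lie_add]; exact add_mem h1 h2)
      (fun c hc d hd x hx y hy => hgenV c hc d hd (hbr c d x hx y hy))
  have hUB : ∀ x ∈ U', ∀ y ∈ U', (B x) y = 0 :=
    finsetSup_induction₂ δ.maxGenEigenspace (fun x y => (B x) y = 0)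
      (fun y => by show (B (0 : g)) y = 0; simp)
      (fun x => by show (B x) (0 : g) = 0; simp)
      (fun x₁ x₂ y h1 h2 => by
        show (B (x₁ + x₂)) y = 0
        have h1' : (B x₁) y = 0 := h1
        have h2' : (B x₂) y = 0 := h2
        rw [map_add, LinearMap.add_apply, h1', h2', add_zero])
      (fun x y₁ y₂ h1 h2 => by
        show (B x) (y₁ + y₂) = 0
        have h1' : (B x) y₁ = 0 := h1
        have h2' : (B x) y₂ = 0 := h2
        rw [map_add, h1', h2', add_zero])
      (fun c hc d hd x hx y hy => by
        show (B x) y = 0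
        exact hpair c d (hsum_ne_P c hc d hd) x hx y hy)
  have hVB : ∀ x ∈ V', ∀ y ∈ V', (B x) y = 0 :=
    finsetSup_induction₂ δ.maxGenEigenspace (fun x y => (B x) y = 0)
      (fun y => by show (B (0 : g)) y = 0; simp)
      (fun x => by show (B x) (0 : g) = 0; simp)
      (fun x₁ x₂ y h1 h2 => by
        show (B (x₁ + x₂)) y = 0
        have h1' : (B x₁) y = 0 := h1
        have h2' : (B x₂) y = 0 := h2
        rw [map_add, LinearMap.add_apply, h1', h2', add_zero])
      (fun x y₁ y₂ h1 h2 => by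
        show (B x) (y₁ + y₂) = 0
        have h1' : (B x) y₁ = 0 := h1
        have h2' : (B x) y₂ = 0 := h2
        rw [map_add, h1', h2', add_zero])
      (fun c hc d hd x hx y hy => by
        show (B x) y = 0
        exact hpair c d (hsum_ne_N c hc d hd) x hx y hy)
  have hUω : ∀ x ∈ U', ∀ y ∈ U', (ω x) y = 0 :=
    finsetSup_induction₂ δ.maxGenEigenspace (fun x y => (ω x) y = 0)
      (fun y => by show (ω (0 : g)) y = 0; simp)
      (fun x => by show (ω x) (0 : g) = 0; simp)
      (fun x₁ x₂ y h1 h2 => by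
        show (ω (x₁ + x₂)) y = 0
        have h1' : (ω x₁) y = 0 := h1
        have h2' : (ω x₂) y = 0 := h2
        rw [map_add, LinearMap.add_apply, h1', h2', add_zero])
      (fun x y₁ y₂ h1 h2 => by
        show (ω x) (y₁ + y₂) = 0
        have h1' : (ω x) y₁ = 0 := h1
        have h2' : (ω x) y₂ = 0 := h2
        rw [map_add, h1', h2', add_zero])
      (fun c hc d hd x hx y hy => by
        show (ω x) y = 0
        rw [← hδ]
        exact hpair c d (hsum_ne_P c hc d hd) (δ x) (hδmem c x hx) y hy)
  have hVω : ∀ x ∈ V', ∀ y ∈ V', (ω x) y = 0 :=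
    finsetSup_induction₂ δ.maxGenEigenspace (fun x y => (ω x) y = 0)
      (fun y => by show (ω (0 : g)) y = 0; simp)
      (fun x => by show (ω x) (0 : g) = 0; simp)
      (fun x₁ x₂ y h1 h2 => by
        show (ω (x₁ + x₂)) y = 0
        have h1' : (ω x₁) y = 0 := h1
        have h2' : (ω x₂) y = 0 := h2
        rw [map_add, LinearMap.add_apply, h1', h2', add_zero])
      (fun x y₁ y₂ h1 h2 => by
        show (ω x) (y₁ + y₂) = 0
        have h1' : (ω x) y₁ = 0 := h1
        have h2' : (ω x) y₂ = 0 := h2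
        rw [map_add, h1', h2', add_zero])
      (fun c hc d hd x hx y hy => by
        show (ω x) y = 0
        rw [← hδ]
        exact hpair c d (hsum_ne_N c hc d hd) (δ x) (hδmem c x hx) y hy)
  -- the Lie subalgebras
  refine ⟨{ toSubmodule := U', lie_mem' := fun {x y} hx hy => hUlie x hx y hy },
          { toSubmodule := V', lie_mem' := fun {x y} hx hy => hVlie x hx y hy },
          ⟨?_, ?_⟩, hUB, hVB, hUω, hVω⟩
  · -- disjointness
    exact finsetSup_disjoint (Module.End.independent_maxGenEigenspace δ) P N
      (fun c hc hcN => absurd (hPpos c hc) (not_lt.mpr (le_of_lt (hNneg c hcN))))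
  · -- codisjointness
    rw [codisjoint_iff, eq_top_iff, ← Module.End.iSup_maxGenEigenspace_eq_top δ]
    refine iSup_le fun c => ?_
    by_cases hb : δ.maxGenEigenspace c = ⊥
    · rw [hb]; exact bot_le
    · have hcΛ : c ∈ Λ := hΛfin.mem_toFinset.mpr hb
      rcases lt_trichotomy (f c) 0 with h | h | h
      · exact (Finset.le_sup (Finset.mem_filter.mpr ⟨hcΛ, h⟩)).trans le_sup_right
      · exact absurd h (hfΛ c hb)
      · exact (Finset.le_sup (Finset.mem_filter.mpr ⟨hcΛ, h⟩)).trans le_sup_left
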